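/- Consider a two-level system with Hermitian Hamiltonian Ĥ = [[h_S, h_P],[conj(h_P), h_R]] ∈ M_2(ℂ) (h_S, h_R ∈ ℝ, h_P ∈ ℂ) and a single noise operator L̂ = [[l_S, l_P],[l_Q, l_R]] ∈ M_2(ℂ), with Lindblad generator 𝓛(ρ) = −i[Ĥ, ρ] + L̂ρL̂† − ½(L̂†L̂ρ + ρL̂†L̂). The pure state ρ_d = diag(1, 0) is a globally attractive invariant state — i.e. 𝓛(ρ_d) = 0 and exp(t𝓛)(ρ_0) → ρ_d as t → +∞ for every density matrix ρ_0 — if and only if: i·h_P − ½·conj(l_S)·l_P = 0, l_Q = 0, and l_P ≠ 0. -/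

import Mathlib

open Matrix Filter
open scoped ComplexOrder

attribute [local instance] Matrix.frobeniusNormedAddCommGroup Matrix.frobeniusNormedSpace

noncomputable section

/-- A density matrix: positive semidefinite (hence Hermitian) with unit trace. -/
def IsDensityMatrix {N : ℕ} (ρ : Matrix (Fin N) (Fin N) ℂ) : Prop :=
  ρ.PosSemidef ∧ ρ.trace = 1

/-- The Lindblad generator associated with a Hamiltonian `H` and noise operators. -/
def lindblad {N m : ℕ} (H : Matrix (Fin N) (Fin N) ℂ)
    (L : Fin m → Matrix (Fin N) (Fin N) ℂ) :
    Matrix (Fin N) (Fin N) ℂ →ₗ[ℂ] Matrix (Fin N) (Fin N) ℂ :=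
  (-Complex.I) • (LinearMap.mulLeft ℂ H - LinearMap.mulRight ℂ H)
    + ∑ k : Fin m,
      ((LinearMap.mulRight ℂ (L k)ᴴ).comp (LinearMap.mulLeft ℂ (L k))
        - (1 / 2 : ℂ) •
          (LinearMap.mulLeft ℂ ((L k)ᴴ * L k) + LinearMap.mulRight ℂ ((L k)ᴴ * L k)))

/-- The Lindblad generator as a continuous linear endomorphism. -/
def lindbladCLM {N m : ℕ} (H : Matrix (Fin N) (Fin N) ℂ)
    (L : Fin m → Matrix (Fin N) (Fin N) ℂ) :
    Matrix (Fin N) (Fin N) ℂ →L[ℂ] Matrix (Fin N) (Fin N) ℂ :=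
  LinearMap.toContinuousLinearMap (lindblad H L)

set_option maxHeartbeats 2000000
set_option synthInstance.maxHeartbeats 1000000

namespace TwoLevelAux

open Matrix Filter
open scoped ComplexOrder

abbrev M2 := Matrix (Fin 2) (Fin 2) ℂ

/-! ### Scalar calculus helpers -/

lemma cexp_hasDeriv (μ : ℂ) (t : ℝ) :
    HasDerivAt (fun s : ℝ => Complex.exp (μ * s)) (μ * Complex.exp (μ * t)) t := by
  have h1 : HasDerivAt (fun s : ℝ => μ * (s : ℂ)) μ t := by
    simpa using (Complex.ofRealCLM.hasDerivAt (x := t)).const_mul μ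
  simpa [mul_comm] using h1.cexp

lemma ofReal_hasDeriv (t : ℝ) : HasDerivAt (fun s : ℝ => (s : ℂ)) 1 t := by
  simpa using (hasDerivAt_id t).ofReal_comp

lemma norm_cexp (μ : ℂ) (t : ℝ) : ‖Complex.exp (μ * t)‖ = Real.exp (μ.re * t) := by
  rw [Complex.norm_exp]
  norm_num [Complex.mul_re]

lemma re_mul_atBot {c : ℝ} (hc : c < 0) : Tendsto (fun t : ℝ => c * t) atTop atBot :=
  tendsto_id.const_mul_atTop_of_neg hc

lemma tendsto_cexp_zero {μ : ℂ} (hμ : μ.re < 0) :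
    Tendsto (fun t : ℝ => Complex.exp (μ * t)) atTop (nhds 0) := by
  rw [tendsto_zero_iff_norm_tendsto_zero]
  simp only [norm_cexp]
  exact Real.tendsto_exp_atBot.comp (re_mul_atBot hμ)

lemma tendsto_t_cexp_zero {μ : ℂ} (hμ : μ.re < 0) :
    Tendsto (fun t : ℝ => (t : ℂ) * Complex.exp (μ * t)) atTop (nhds 0) := by
  rw [tendsto_zero_iff_norm_tendsto_zero]
  set c : ℝ := -μ.re with hc
  have hc0 : 0 < c := by simp [hc]; linarith
  have hreal : Tendsto (fun t : ℝ => t * Real.exp (μ.re * t)) atTop (nhds 0) := by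
    have h := Real.tendsto_pow_mul_exp_neg_atTop_nhds_zero 1
    have hct : Tendsto (fun t : ℝ => c * t) atTop atTop :=
      tendsto_id.const_mul_atTop hc0
    have h2 := (h.comp hct).const_mul (1/c)
    rw [mul_zero] at h2
    refine h2.congr fun t => ?_
    simp only [Function.comp]
    have hμt : μ.re * t = -(c * t) := by rw [hc]; ring
    rw [hμt]
    field_simp
  have heq : ∀ᶠ t : ℝ in atTop, t * Real.exp (μ.re * t)
      = ‖(t : ℂ) * Complex.exp (μ * t)‖ := by
    filter_upwards [eventually_ge_atTop (0:ℝ)] with t ht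
    rw [norm_mul, norm_cexp, Complex.norm_real, Real.norm_of_nonneg ht]
  exact hreal.congr' heq

/-- Solution of the scalar inhomogeneous linear ODE `k' = μ k + ν e^{-γ t}`, with
`k 0 = 0` and `k → 0` when `Re μ < 0`, `Re (-γ) < 0`. -/
lemma exists_k (μ γ ν : ℂ) (hμ : μ.re < 0) (hγ : (-γ).re < 0) :
    ∃ k : ℝ → ℂ, k 0 = 0 ∧
      (∀ t : ℝ, HasDerivAt k (μ * k t + ν * Complex.exp (-γ * t)) t) ∧
      Tendsto k atTop (nhds 0) := by
  by_cases h : μ + γ = 0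
  · refine ⟨fun t => ν * ((t : ℂ) * Complex.exp (μ * t)), by simp, fun t => ?_, ?_⟩
    · have h2 := ((ofReal_hasDeriv t).mul (cexp_hasDeriv μ t)).const_mul ν
      have hg : -γ = μ := by linear_combination -h
      have hg2 : -γ * (t : ℂ) = μ * t := by rw [hg]
      refine h2.congr_deriv ?_
      rw [hg2]
      ring
    · have h3 := (tendsto_t_cexp_zero hμ).const_mul ν
      rw [mul_zero] at h3
      exact h3.congr fun t => by ring
  · refine ⟨fun t => ν/(μ+γ) * (Complex.exp (μ*t) - Complex.exp (-γ*t)), by simp,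
      fun t => ?_, ?_⟩
    · have h2 := ((cexp_hasDeriv μ t).sub (cexp_hasDeriv (-γ) t)).const_mul (ν/(μ+γ))
      refine h2.congr_deriv ?_
      field_simp
      ring
    · have h3 := ((tendsto_cexp_zero hμ).sub (tendsto_cexp_zero hγ)).const_mul (ν/(μ+γ))
      simpa using h3

/-! ### Matrix-valued calculus helpers -/

lemma mat_decomp (p q r s : ℂ) :
    !![p, q; r, s] = p • !![(1:ℂ),0;0,0] + q • !![(0:ℂ),1;0,0]
      + r • !![(0:ℂ),0;1,0] + s • !![(0:ℂ),0;0,1] := by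
  ext i j
  fin_cases i <;> fin_cases j <;> simp

lemma hasDerivAt_matrix {f00 f01 f10 f11 : ℝ → ℂ} {g00 g01 g10 g11 : ℂ} {t : ℝ}
    (h00 : HasDerivAt f00 g00 t) (h01 : HasDerivAt f01 g01 t)
    (h10 : HasDerivAt f10 g10 t) (h11 : HasDerivAt f11 g11 t) :
    HasDerivAt (fun u => (!![f00 u, f01 u; f10 u, f11 u] : M2))
      (!![g00, g01; g10, g11] : M2) t := by
  have hfun : (fun u => (!![f00 u, f01 u; f10 u, f11 u] : M2))
      = fun u => f00 u • !![(1:ℂ),0;0,0] + f01 u • !![(0:ℂ),1;0,0]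
        + f10 u • !![(0:ℂ),0;1,0] + f11 u • !![(0:ℂ),0;0,1] :=
    funext fun u => mat_decomp _ _ _ _
  rw [hfun, mat_decomp g00 g01 g10 g11]
  exact (((h00.smul_const _).add (h01.smul_const _)).add (h10.smul_const _)).add
    (h11.smul_const _)

lemma tendsto_matrix {f00 f01 f10 f11 : ℝ → ℂ} {g00 g01 g10 g11 : ℂ}
    (h00 : Tendsto f00 atTop (nhds g00)) (h01 : Tendsto f01 atTop (nhds g01))
    (h10 : Tendsto f10 atTop (nhds g10)) (h11 : Tendsto f11 atTop (nhds g11)) :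
    Tendsto (fun u => (!![f00 u, f01 u; f10 u, f11 u] : M2)) atTop
      (nhds (!![g00, g01; g10, g11] : M2)) := by
  have hfun : (fun u => (!![f00 u, f01 u; f10 u, f11 u] : M2))
      = fun u => f00 u • !![(1:ℂ),0;0,0] + f01 u • !![(0:ℂ),1;0,0]
        + f10 u • !![(0:ℂ),0;1,0] + f11 u • !![(0:ℂ),0;0,1] :=
    funext fun u => mat_decomp _ _ _ _
  rw [hfun, mat_decomp g00 g01 g10 g11]
  exact (((h00.smul_const _).add (h01.smul_const _)).add (h10.smul_const _)).add
    (h11.smul_const _)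

/-! ### Exponential of a generator via ODE uniqueness -/

@[reducible] def m2Unif : UniformSpace M2 :=
  (frobeniusNormedAddCommGroup : NormedAddCommGroup M2).toUniformSpace
@[reducible] def m2Top : TopologicalSpace M2 := m2Unif.toTopologicalSpace
attribute [local instance 2000] m2Unif m2Top
def naQR : NormedAlgebra ℚ (M2 →L[ℝ] M2) := NormedAlgebra.restrictScalars ℚ ℝ _
def naQC : NormedAlgebra ℚ (M2 →L[ℂ] M2) := NormedAlgebra.restrictScalars ℚ ℂ _
attribute [local instance] naQR naQC

/-- restrictScalars as a ring hom -/
def resRH : (M2 →L[ℂ] M2) →+* (M2 →L[ℝ] M2) where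
  toFun := ContinuousLinearMap.restrictScalars ℝ
  map_one' := rfl
  map_mul' _ _ := rfl
  map_zero' := rfl
  map_add' _ _ := rfl

lemma resRH_cont : Continuous resRH := by
  have h := (ContinuousLinearMap.restrictScalarsIsometry ℂ M2 M2 ℝ ℝ).continuous
  rw [ContinuousLinearMap.coe_restrictScalarsIsometry] at h
  have he : ⇑resRH = (ContinuousLinearMap.restrictScalars ℝ :
      (M2 →L[ℂ] M2) → (M2 →L[ℝ] M2)) := rfl
  rw [he]
  exact h

lemma exp_res (B : M2 →L[ℂ] M2) (x : M2) :
    NormedSpace.exp B x = NormedSpace.exp (B.restrictScalars ℝ) x := by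
  have h := NormedSpace.map_exp resRH resRH_cont B
  have h2 : NormedSpace.exp (B.restrictScalars ℝ) = resRH (NormedSpace.exp B) := by
    rw [h]; rfl
  rw [h2]; rfl

lemma exp_ode (A : M2 →L[ℂ] M2) (y : ℝ → M2)
    (hy : ∀ t, HasDerivAt y (A (y t)) t) (t : ℝ) :
    NormedSpace.exp (t • A) (y 0) = y t := by
  set B : M2 →L[ℝ] M2 := A.restrictScalars ℝ with hB
  have hres : ∀ s : ℝ, (s • A).restrictScalars ℝ = s • B := fun s => rfl
  have hconst : ∀ s : ℝ, HasDerivAt (fun u : ℝ => NormedSpace.exp ((-u) • B) (y u)) 0 s := by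
    intro s
    have h0 : HasDerivAt (fun u : ℝ => NormedSpace.exp (u • B))
        (NormedSpace.exp ((-s) • B) * B) (-s) := hasDerivAt_exp_smul_const B (-s)
    have h1 : HasDerivAt (fun u : ℝ => NormedSpace.exp ((-u) • B))
        (-(NormedSpace.exp ((-s) • B) * B)) s := by
      simpa [Function.comp_def] using HasDerivAt.scomp s h0 (hasDerivAt_neg s)
    have hy' : HasDerivAt y (B (y s)) s := hy s
    have h2 := h1.clm_apply hy'
    refine h2.congr_deriv ?_
    simp [ContinuousLinearMap.mul_apply]
  have hcst := is_const_of_deriv_eq_zero (fun s => (hconst s).differentiableAt)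
    (fun s => (hconst s).deriv)
  have key : NormedSpace.exp ((-t) • B) (y t) = y 0 := by
    have h := hcst t 0
    rw [neg_zero] at h
    have h0 : (0 : ℝ) • B = 0 := zero_smul ℝ B
    rw [h0, NormedSpace.exp_zero, ContinuousLinearMap.one_apply] at h
    exact h
  have comm : Commute (t • B) ((-t) • B) := by
    refine ContinuousLinearMap.ext fun x => ?_
    simp only [ContinuousLinearMap.mul_apply, ContinuousLinearMap.smul_apply,
      ContinuousLinearMap.map_smul]
    rw [smul_comm]
  have hzero : t • B + (-t) • B = 0 := by
    refine ContinuousLinearMap.ext fun x => ?_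
    simp only [ContinuousLinearMap.add_apply, ContinuousLinearMap.smul_apply,
      ContinuousLinearMap.zero_apply, ← add_smul]
    simp
  have hmul : NormedSpace.exp (t • B) * NormedSpace.exp ((-t) • B) = 1 := by
    rw [← NormedSpace.exp_add_of_commute comm, hzero, NormedSpace.exp_zero]
  calc NormedSpace.exp (t • A) (y 0)
      = NormedSpace.exp (t • B) (NormedSpace.exp ((-t) • B) (y t)) := by
        rw [key]; rw [exp_res, hres]
    _ = (NormedSpace.exp (t • B) * NormedSpace.exp ((-t) • B)) (y t) := by
        rw [ContinuousLinearMap.mul_apply]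
    _ = y t := by rw [hmul, ContinuousLinearMap.one_apply]

lemma exp_fixed (A : M2 →L[ℂ] M2) (x : M2) (hx : A x = 0) (t : ℝ) :
    NormedSpace.exp (t • A) x = x :=
  exp_ode A (fun _ => x) (fun s => by simpa [hx] using hasDerivAt_const s x) t

end TwoLevelAux

lemma lindblad_one_apply (H : Matrix (Fin 2) (Fin 2) ℂ) (L : Fin 1 → Matrix (Fin 2) (Fin 2) ℂ)
    (ρ : Matrix (Fin 2) (Fin 2) ℂ) :
    lindblad H L ρ = (-Complex.I) • (H * ρ - ρ * H)
      + (L 0 * ρ * (L 0)ᴴ - (1/2 : ℂ) • ((L 0)ᴴ * L 0 * ρ + ρ * ((L 0)ᴴ * L 0))) := by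
  simp [lindblad, LinearMap.mulLeft_apply, LinearMap.mulRight_apply, mul_assoc]

lemma conjT_fin_two (a b c d : ℂ) :
    !![a, b; c, d]ᴴ = !![starRingEnd ℂ a, starRingEnd ℂ c; starRingEnd ℂ b, starRingEnd ℂ d] := by
  ext i j; fin_cases i <;> fin_cases j <;> simp

/-- value of the generator at ρ_d, general parameters -/
lemma lindblad_rho_d (hS hR : ℝ) (hP lS lP lQ lR : ℂ) :
    lindblad !![(hS : ℂ), hP; (starRingEnd ℂ) hP, (hR : ℂ)]
        (fun _ : Fin 1 => !![lS, lP; lQ, lR]) !![(1 : ℂ), 0; 0, 0] =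
      !![-(starRingEnd ℂ lQ * lQ),
         Complex.I*hP + lS*starRingEnd ℂ lQ - (1/2)*(starRingEnd ℂ lS*lP + starRingEnd ℂ lQ*lR);
         -(Complex.I*starRingEnd ℂ hP) + lQ*starRingEnd ℂ lS
           - (1/2)*(starRingEnd ℂ lP*lS + starRingEnd ℂ lR*lQ),
         starRingEnd ℂ lQ * lQ] := by
  rw [lindblad_one_apply]
  rw [conjT_fin_two]
  simp only [Matrix.mul_fin_two]
  ext i j
  fin_cases i <;> fin_cases j <;>
    · simp [Matrix.add_apply, Matrix.sub_apply, Matrix.smul_apply, smul_eq_mul]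
      ring_nf
      try simp only [Complex.I_sq]
      try ring_nf
      try ring

lemma structure_lem (hS hR : ℝ) (hP lS lP lR : ℂ)
    (h1 : Complex.I * hP - (1 / 2 : ℂ) * (starRingEnd ℂ) lS * lP = 0)
    (ρ : Matrix (Fin 2) (Fin 2) ℂ) :
    lindblad !![(hS : ℂ), hP; (starRingEnd ℂ) hP, (hR : ℂ)]
        (fun _ : Fin 1 => !![lS, lP; 0, lR]) ρ =
      !![(starRingEnd ℂ lP * lP) * ρ 1 1,
         (Complex.I*(hR - hS) + lS * starRingEnd ℂ lR
            - (1/2)*(starRingEnd ℂ lS*lS + starRingEnd ℂ lP*lP + starRingEnd ℂ lR*lR)) * ρ 0 1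
           + (lP*(starRingEnd ℂ lR - starRingEnd ℂ lS)) * ρ 1 1;
         (-(Complex.I*(hR - hS)) + starRingEnd ℂ lS * lR
            - (1/2)*(starRingEnd ℂ lS*lS + starRingEnd ℂ lP*lP + starRingEnd ℂ lR*lR)) * ρ 1 0
           + (starRingEnd ℂ lP*(lR - lS)) * ρ 1 1,
         -((starRingEnd ℂ lP * lP) * ρ 1 1)] := by
  have h2 : Complex.I * hP = (1 / 2 : ℂ) * (starRingEnd ℂ) lS * lP := by linear_combination h1
  have h3 : -Complex.I * (Complex.I * hP) = hP := by
    rw [neg_mul, ← mul_assoc, Complex.I_mul_I]; ring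
  have hPe : hP = -Complex.I * ((1/2) * starRingEnd ℂ lS * lP) := by rw [← h3, h2]
  subst hPe
  rw [lindblad_one_apply]
  rw [show !![lS,lP;(0:ℂ),lR]ᴴ = !![starRingEnd ℂ lS, 0; starRingEnd ℂ lP, starRingEnd ℂ lR] from by
    ext i j; fin_cases i <;> fin_cases j <;> simp]
  have hρ : ρ = !![ρ 0 0, ρ 0 1; ρ 1 0, ρ 1 1] := by
    ext i j; fin_cases i <;> fin_cases j <;> rfl
  rw [hρ]
  simp only [Matrix.mul_fin_two, _root_.map_mul, map_neg, map_div₀, _root_.map_one,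
    map_ofNat, Complex.conj_I, Complex.conj_ofReal, RingHomCompTriple.comp_apply,
    Complex.conj_conj]
  ext i j
  fin_cases i <;> fin_cases j <;>
    · simp [Matrix.add_apply, Matrix.sub_apply, Matrix.smul_apply, smul_eq_mul]
      ring_nf
      try simp only [Complex.I_sq]
      try ring_nf
      try ring

/-- For a two-level system with Hamiltonian `Ĥ = [[h_S, h_P], [h_P*, h_R]]` and a single
noise operator `L̂ = [[l_S, l_P], [l_Q, l_R]]`, the pure state `ρ_d = diag(1, 0)` is a
globally attractive invariant state of the Lindblad equation if and only if
`i h_P − ½ l_S* l_P = 0`, `l_Q = 0` and `l_P ≠ 0`. -/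
theorem two_level_globally_attractive_iff
    (hS hR : ℝ) (hP lS lP lQ lR : ℂ) :
    (lindblad !![(hS : ℂ), hP; (starRingEnd ℂ) hP, (hR : ℂ)]
        (fun _ : Fin 1 => !![lS, lP; lQ, lR]) !![(1 : ℂ), 0; 0, 0] = 0 ∧
      ∀ ρ0 : Matrix (Fin 2) (Fin 2) ℂ, IsDensityMatrix ρ0 →
        Tendsto
          (fun t : ℝ =>
            @NormedSpace.exp _ _ _
              (@NonUnitalSeminormedRing.toIsTopologicalRing _
                ContinuousLinearMap.toNormedRing.toNonUnitalNormedRing.toNonUnitalSeminormedRing)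
              (t • lindbladCLM !![(hS : ℂ), hP; (starRingEnd ℂ) hP, (hR : ℂ)]
                (fun _ : Fin 1 => !![lS, lP; lQ, lR])) ρ0)
          atTop (nhds !![(1 : ℂ), 0; 0, 0])) ↔
      (Complex.I * hP - (1 / 2 : ℂ) * (starRingEnd ℂ) lS * lP = 0 ∧ lQ = 0 ∧ lP ≠ 0) := by
  constructor
  · rintro ⟨h0, hconv⟩
    rw [lindblad_rho_d] at h0
    have h11 := (Matrix.ext_iff.2 h0) 1 1
    simp at h11
    have hQ : lQ = 0 := h11
    subst hQ
    have h01 := (Matrix.ext_iff.2 h0) 0 1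
    simp at h01
    have hgoal1 : Complex.I * hP - (1 / 2 : ℂ) * (starRingEnd ℂ) lS * lP = 0 := by
      linear_combination h01
    refine ⟨hgoal1, rfl, ?_⟩
    intro hlP
    subst hlP
    have hhP : hP = 0 := by
      have h2 : Complex.I * hP = 0 := by linear_combination hgoal1
      rcases mul_eq_zero.mp h2 with h3 | h3
      · exact absurd h3 Complex.I_ne_zero
      · exact h3
    subst hhP
    -- the state diag(0,1) is also invariant: contradiction with global attractivity
    have hfix : lindblad !![((hS:ℝ) : ℂ), 0; (starRingEnd ℂ) 0, ((hR:ℝ) : ℂ)]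
        (fun _ : Fin 1 => !![lS, 0; 0, lR]) !![(0 : ℂ), 0; 0, 1] = 0 := by
      rw [lindblad_one_apply, conjT_fin_two]
      simp only [Matrix.mul_fin_two]
      ext i j
      fin_cases i <;> fin_cases j <;>
        · simp [Matrix.add_apply, Matrix.sub_apply, Matrix.smul_apply, smul_eq_mul]
          try ring_nf
          try simp only [Complex.I_sq]
          try ring_nf
          try ring
    have hdm : IsDensityMatrix (!![(0 : ℂ), 0; 0, 1]) := by
      refine ⟨⟨?_, ?_⟩, ?_⟩
      · ext i j; fin_cases i <;> fin_cases j <;> simp [Matrix.conjTranspose_apply]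
      · intro x
        simp [Finsupp.sum_fintype, Fin.sum_univ_two]
        exact star_mul_self_nonneg _
      · rw [Matrix.trace_fin_two]; simp
    have hten := hconv _ hdm
    have hAfix : (lindbladCLM !![((hS:ℝ) : ℂ), 0; (starRingEnd ℂ) 0, ((hR:ℝ) : ℂ)]
        (fun _ : Fin 1 => !![lS, 0; 0, lR])) (!![(0 : ℂ), 0; 0, 1]) = 0 := hfix
    have hconst : (fun t : ℝ =>
        @NormedSpace.exp _ _ _
          (@NonUnitalSeminormedRing.toIsTopologicalRing _
            ContinuousLinearMap.toNormedRing.toNonUnitalNormedRing.toNonUnitalSeminormedRing)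
          (t • lindbladCLM !![((hS:ℝ) : ℂ), 0; (starRingEnd ℂ) 0, ((hR:ℝ) : ℂ)]
            (fun _ : Fin 1 => !![lS, 0; 0, lR])) (!![(0 : ℂ), 0; 0, 1]))
        = fun _ : ℝ => (!![(0 : ℂ), 0; 0, 1]) :=
      funext fun t => TwoLevelAux.exp_fixed _ _ hAfix t
    rw [hconst] at hten
    have heq := tendsto_nhds_unique hten tendsto_const_nhds
    have := (Matrix.ext_iff.2 heq) 0 0
    simp at this
  · rintro ⟨h1, hQ, hP0⟩
    subst hQ
    have hsl := structure_lem hS hR hP lS lP lR h1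
    set μ : ℂ := Complex.I*(hR - hS) + lS * starRingEnd ℂ lR
        - (1/2)*(starRingEnd ℂ lS*lS + starRingEnd ℂ lP*lP + starRingEnd ℂ lR*lR) with hμ
    set μ' : ℂ := -(Complex.I*(hR - hS)) + starRingEnd ℂ lS * lR
        - (1/2)*(starRingEnd ℂ lS*lS + starRingEnd ℂ lP*lP + starRingEnd ℂ lR*lR) with hμ'
    set ν : ℂ := lP*(starRingEnd ℂ lR - starRingEnd ℂ lS) with hν
    set ν' : ℂ := starRingEnd ℂ lP*(lR - lS) with hν'
    set γ : ℂ := starRingEnd ℂ lP * lP with hγ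
    have hγre : γ.re = Complex.normSq lP := by
      rw [hγ]
      simp [Complex.mul_re, Complex.conj_re, Complex.conj_im, Complex.normSq_apply]
    have hγneg : (-γ).re < 0 := by
      rw [Complex.neg_re, hγre]
      simpa using Complex.normSq_pos.mpr hP0
    have hμre : μ.re = (lS * starRingEnd ℂ lR).re
        - (1/2)*(Complex.normSq lS + Complex.normSq lP + Complex.normSq lR) := by
      rw [hμ, hγ]
      simp [Complex.add_re, Complex.sub_re, Complex.mul_re, Complex.I_re, Complex.I_im,
        Complex.ofReal_re, Complex.ofReal_im, Complex.conj_re, Complex.conj_im,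
        Complex.normSq_apply]
      try ring
    have hμneg : μ.re < 0 := by
      rw [hμre]
      have hb : (lS * starRingEnd ℂ lR).re ≤ ‖lS‖ * ‖lR‖ := by
        calc (lS * starRingEnd ℂ lR).re ≤ ‖lS * starRingEnd ℂ lR‖ :=
              Complex.re_le_norm _
          _ = ‖lS‖ * ‖lR‖ := by
              rw [norm_mul, Complex.norm_conj]
      have h2 : Complex.normSq lS = ‖lS‖ ^ 2 := (Complex.sq_norm lS).symm
      have h3 : Complex.normSq lR = ‖lR‖ ^ 2 := (Complex.sq_norm lR).symm
      have h4 : 0 < Complex.normSq lP := Complex.normSq_pos.mpr hP0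
      nlinarith [sq_nonneg (‖lS‖ - ‖lR‖)]
    have hμ'c : μ' = starRingEnd ℂ μ := by
      rw [hμ', hμ, hγ]
      simp only [map_add, map_sub, _root_.map_mul, Complex.conj_I, Complex.conj_ofReal,
        Complex.conj_conj, map_div₀, _root_.map_one, map_ofNat]
      ring
    have hμ'neg : μ'.re < 0 := by rw [hμ'c, Complex.conj_re]; exact hμneg
    constructor
    · rw [hsl]
      ext i j
      fin_cases i <;> fin_cases j <;> simp
    · intro ρ0 hρ0
      obtain ⟨k, hk0, hkd, hkt⟩ := TwoLevelAux.exists_k μ γ ν hμneg hγneg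
      obtain ⟨k', hk'0, hk'd, hk't⟩ := TwoLevelAux.exists_k μ' γ ν' hμ'neg hγneg
      set a : ℂ := ρ0 0 0
      set b : ℂ := ρ0 0 1
      set c : ℂ := ρ0 1 0
      set d : ℂ := ρ0 1 1
      have htr : a + d = 1 := by
        have := hρ0.2
        rwa [Matrix.trace_fin_two] at this
      set A := lindbladCLM !![(hS : ℂ), hP; (starRingEnd ℂ) hP, (hR : ℂ)]
          (fun _ : Fin 1 => !![lS, lP; 0, lR]) with hA
      have hAapp : ∀ x, A x = lindblad !![(hS : ℂ), hP; (starRingEnd ℂ) hP, (hR : ℂ)]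
          (fun _ : Fin 1 => !![lS, lP; 0, lR]) x := fun x => rfl
      set y : ℝ → Matrix (Fin 2) (Fin 2) ℂ := fun t =>
        !![a + (1 - Complex.exp (-γ*t)) * d,
           Complex.exp (μ*t) * b + k t * d;
           Complex.exp (μ'*t) * c + k' t * d,
           Complex.exp (-γ*t) * d] with hy
      have hyd : ∀ t, HasDerivAt y (A (y t)) t := by
        intro t
        have hyt : A (y t) =
            !![γ * (Complex.exp (-γ*t) * d),
               μ * (Complex.exp (μ*t) * b + k t * d) + ν * (Complex.exp (-γ*t) * d);
               μ' * (Complex.exp (μ'*t) * c + k' t * d) + ν' * (Complex.exp (-γ*t) * d),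
               -(γ * (Complex.exp (-γ*t) * d))] := by
          rw [hAapp, hsl]
          congr 1 <;> simp [hy]
        rw [hyt, hy]
        refine TwoLevelAux.hasDerivAt_matrix ?_ ?_ ?_ ?_
        · have hd := ((TwoLevelAux.cexp_hasDeriv (-γ) t).const_sub 1).mul_const d
          have hc := (hasDerivAt_const t a).add hd
          refine hc.congr_deriv ?_
          ring
        · have he := ((TwoLevelAux.cexp_hasDeriv μ t).mul_const b).add ((hkd t).mul_const d)
          refine he.congr_deriv ?_
          ring
        · have he := ((TwoLevelAux.cexp_hasDeriv μ' t).mul_const c).add ((hk'd t).mul_const d)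
          refine he.congr_deriv ?_
          ring
        · have he := (TwoLevelAux.cexp_hasDeriv (-γ) t).mul_const d
          refine he.congr_deriv ?_
          ring
      have hy0 : y 0 = ρ0 := by
        rw [hy]
        conv_rhs => rw [Matrix.eta_fin_two ρ0]
        have e0 : Complex.exp (-γ * ((0:ℝ):ℂ)) = 1 := by norm_num [Complex.exp_zero]
        have e1 : Complex.exp (μ * ((0:ℝ):ℂ)) = 1 := by norm_num [Complex.exp_zero]
        have e2 : Complex.exp (μ' * ((0:ℝ):ℂ)) = 1 := by norm_num [Complex.exp_zero]
        simp [e0, e1, e2, hk0, hk'0]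
        exact ⟨⟨rfl, rfl⟩, rfl, rfl⟩
      have hexp : ∀ t : ℝ, @NormedSpace.exp _ _ _
          (@NonUnitalSeminormedRing.toIsTopologicalRing _
            ContinuousLinearMap.toNormedRing.toNonUnitalNormedRing.toNonUnitalSeminormedRing) (t • A) ρ0 = y t := by
        intro t
        rw [← hy0]
        exact TwoLevelAux.exp_ode A y hyd t
      have hlim : Tendsto y atTop (nhds !![(1 : ℂ), 0; 0, 0]) := by
        rw [hy]
        refine TwoLevelAux.tendsto_matrix ?_ ?_ ?_ ?_
        · have hc := tendsto_const_nhds (x := a) (f := atTop (α := ℝ)) |>.add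
            (((tendsto_const_nhds (x := (1:ℂ)) (f := atTop (α := ℝ))).sub
              (TwoLevelAux.tendsto_cexp_zero hγneg)).mul_const d)
          have he1 : a + (1 - (0:ℂ)) * d = a + d := by ring
          rw [he1, htr] at hc
          exact hc
        · have hc := ((TwoLevelAux.tendsto_cexp_zero hμneg).mul_const b).add (hkt.mul_const d)
          simpa using hc
        · have hc := ((TwoLevelAux.tendsto_cexp_zero hμ'neg).mul_const c).add (hk't.mul_const d)
          simpa using hc
        · have hc := (TwoLevelAux.tendsto_cexp_zero hγneg).mul_const d
          simpa using hc
      exact hlim.congr fun t => (hexp t).symm
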